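/- Let (A, μ, ∂_{ij})_{1≤i,j≤p} be a multivariable GDQ ring with p² comultiplications. On Ã = M_p ⊗ A define ∂(T⊗a) = Σ_{i,j} ((T⊗I_p)Δ_{ij}) ⊗ ∂_{ij}a where Δ_{ij} = Σ_k e_{ki}⊗e_{jk} ∈ M_p⊗M_p, using the identification (M_p)⊗² ⊗ A⊗² ≅ Ã⊗Ã sending (T₁⊗T₂)⊗(a₁⊗a₂) to (T₁⊗a₁)⊗(T₂⊗a₂). Then ∂ is a derivation on Ã: ∂((T₁⊗a₁)(T₂⊗a₂)) = ((T₁⊗a₁)⊗(I_p⊗1))∂(T₂⊗a₂) + (∂(T₁⊗a₁))((I_p⊗1)⊗(T₂⊗a₂)). -/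

import Mathlib

/- STATEMENT 6: (4.2) Reduction of a multivariable GDQ ring with p² comultiplications
∂_{ij} to one comultiplication ∂ on Ã = M_p ⊗ A, defined by
∂(T ⊗ a) = Σ_{i,j} ((T ⊗ I_p)Δ_{ij}) ⊗ ∂_{ij} a, with Δ_{ij} = Σ_k e_{ki} ⊗ e_{jk},
under the identification (M_p)^{⊗2} ⊗ A^{⊗2} ≅ Ã ⊗ Ã.
Claim: ∂ is a derivation on Ã. -/

open TensorProduct

set_option synthInstance.maxHeartbeats 1000000
set_option maxHeartbeats 1000000

noncomputable section

variable {p : ℕ} {A : Type*} [Ring A] [Algebra ℂ A]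

/-- Matrix unit `e_{ij}` in `M_p(ℂ)`. -/
def matUnit (i j : Fin p) : Matrix (Fin p) (Fin p) ℂ := Matrix.single i j 1

/-- The map `T ⊗ (x ⊗ y) ↦ (T e_{ki} ⊗ x) ⊗ (e_{jk} ⊗ y)` (one summand of the
identification of `((T ⊗ I_p)Δ_{ij}) ⊗ (x ⊗ y)` with an element of Ã ⊗ Ã). -/
def Lmap (i j k : Fin p) :
    (Matrix (Fin p) (Fin p) ℂ ⊗[ℂ] (A ⊗[ℂ] A)) →ₗ[ℂ]
      (Matrix (Fin p) (Fin p) ℂ ⊗[ℂ] A) ⊗[ℂ] (Matrix (Fin p) (Fin p) ℂ ⊗[ℂ] A) :=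
  (TensorProduct.map
      (TensorProduct.map (LinearMap.mulRight ℂ (matUnit k i)) LinearMap.id)
      (TensorProduct.mk ℂ (Matrix (Fin p) (Fin p) ℂ) A (matUnit j k))).comp
    (TensorProduct.assoc ℂ (Matrix (Fin p) (Fin p) ℂ) A A).symm.toLinearMap


local notation "Mp" => Matrix (Fin p) (Fin p) ℂ

instance bigRing : Ring ((Mp ⊗[ℂ] A) ⊗[ℂ] (Mp ⊗[ℂ] A)) := inferInstance
instance bigLDC : LeftDistribClass ((Mp ⊗[ℂ] A) ⊗[ℂ] (Mp ⊗[ℂ] A)) :=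
  @Distrib.leftDistribClass _ (bigRing).toDistrib
instance bigRDC : RightDistribClass ((Mp ⊗[ℂ] A) ⊗[ℂ] (Mp ⊗[ℂ] A)) :=
  @Distrib.rightDistribClass _ (bigRing).toDistrib
instance bigMZC : MulZeroClass ((Mp ⊗[ℂ] A) ⊗[ℂ] (Mp ⊗[ℂ] A)) :=
  (inferInstance : NonUnitalNonAssocSemiring ((Mp ⊗[ℂ] A) ⊗[ℂ] (Mp ⊗[ℂ] A))).toMulZeroClass

lemma Lmap_tmul (i j k : Fin p) (T : Mp) (x y : A) :
    Lmap i j k (T ⊗ₜ[ℂ] (x ⊗ₜ[ℂ] y)) =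
      ((T * matUnit k i) ⊗ₜ[ℂ] x) ⊗ₜ[ℂ] ((matUnit j k) ⊗ₜ[ℂ] y) := by
  simp [Lmap, TensorProduct.assoc_symm_tmul]

lemma part1 (i j k : Fin p) (T₁ T₂ : Mp) (a₁ : A) (z : A ⊗[ℂ] A) :
    Lmap i j k ((T₁ * T₂) ⊗ₜ[ℂ] ((a₁ ⊗ₜ[ℂ] (1:A)) * z)) =
      ((T₁ ⊗ₜ[ℂ] a₁) ⊗ₜ[ℂ] (1 : Mp ⊗[ℂ] A)) * Lmap i j k (T₂ ⊗ₜ[ℂ] z) := by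
  induction z using TensorProduct.induction_on with
  | zero => simp only [mul_zero, tmul_zero, map_zero]
  | tmul x y =>
      simp only [Algebra.TensorProduct.tmul_mul_tmul, one_mul, Lmap_tmul,
        Algebra.TensorProduct.one_def, mul_assoc]
  | add u v hu hv =>
      simp only [mul_add, tmul_add, map_add, hu, hv]

lemma mul_matUnit (T : Mp) (k i : Fin p) :
    T * matUnit k i = ∑ m : Fin p, T m k • matUnit m i := by
  ext a b
  simp only [matUnit, Matrix.mul_apply, Matrix.single, Matrix.sum_apply,
    Matrix.smul_apply, Matrix.of_apply, smul_ite, smul_eq_mul, mul_one, smul_zero, mul_ite, mul_zero]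
  by_cases hib : i = b <;> simp [hib, eq_comm]

lemma matUnit_mul (T : Mp) (j k : Fin p) :
    matUnit j k * T = ∑ m : Fin p, T k m • matUnit j m := by
  ext a b
  simp only [matUnit, Matrix.mul_apply, Matrix.single, Matrix.sum_apply,
    Matrix.smul_apply, Matrix.of_apply, smul_ite, smul_eq_mul, mul_one, smul_zero, mul_ite, mul_zero]
  by_cases hja : j = a <;> simp [hja, eq_comm]

lemma key_swap {V : Type*} [AddCommMonoid V] [Module ℂ V]
    (B : Mp →ₗ[ℂ] Mp →ₗ[ℂ] V) (T : Mp) (i j : Fin p) :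
    ∑ k : Fin p, B (T * matUnit k i) (matUnit j k)
      = ∑ k : Fin p, B (matUnit k i) (matUnit j k * T) := by
  simp only [mul_matUnit, matUnit_mul, map_sum, map_smul, LinearMap.sum_apply,
    LinearMap.smul_apply]
  rw [Finset.sum_comm]

/-- Bilinear map `(P, Q) ↦ ((T₁ P) ⊗ x) ⊗ (Q ⊗ w)`. -/
def Bmap (T₁ : Mp) (x w : A) :
    Mp →ₗ[ℂ] Mp →ₗ[ℂ] (Mp ⊗[ℂ] A) ⊗[ℂ] (Mp ⊗[ℂ] A) :=
  LinearMap.mk₂ ℂ (fun P Q => ((T₁ * P) ⊗ₜ[ℂ] x) ⊗ₜ[ℂ] (Q ⊗ₜ[ℂ] w))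
    (fun P P' Q => by simp [mul_add, add_tmul])
    (fun c P Q => by simp [Algebra.mul_smul_comm, smul_tmul'])
    (fun P Q Q' => by simp [add_tmul, tmul_add])
    (fun c P Q => by simp only [← smul_tmul', tmul_smul])

lemma part2 (i j : Fin p) (T₁ T₂ : Mp) (a₂ : A) (z : A ⊗[ℂ] A) :
    ∑ k : Fin p, Lmap i j k ((T₁ * T₂) ⊗ₜ[ℂ] (z * ((1:A) ⊗ₜ[ℂ] a₂))) =
      ∑ k : Fin p, (Lmap i j k (T₁ ⊗ₜ[ℂ] z)) *
        ((1 : Mp ⊗[ℂ] A) ⊗ₜ[ℂ] (T₂ ⊗ₜ[ℂ] a₂)) := by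
  induction z using TensorProduct.induction_on with
  | zero => simp only [zero_mul, tmul_zero, map_zero, Finset.sum_const_zero]
  | tmul x y =>
      have h1 : ∀ k : Fin p, Lmap i j k ((T₁ * T₂) ⊗ₜ[ℂ] ((x ⊗ₜ[ℂ] y) * ((1:A) ⊗ₜ[ℂ] a₂)))
          = Bmap T₁ x (y * a₂) (T₂ * matUnit k i) (matUnit j k) := by
        intro k
        simp [Algebra.TensorProduct.tmul_mul_tmul, Lmap_tmul, Bmap, mul_assoc]
        rfl
      have h2 : ∀ k : Fin p, (Lmap i j k (T₁ ⊗ₜ[ℂ] (x ⊗ₜ[ℂ] y))) *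
            ((1 : Mp ⊗[ℂ] A) ⊗ₜ[ℂ] (T₂ ⊗ₜ[ℂ] a₂))
          = Bmap T₁ x (y * a₂) (matUnit k i) (matUnit j k * T₂) := by
        intro k
        simp [Lmap_tmul, Algebra.TensorProduct.tmul_mul_tmul, Bmap,
          Algebra.TensorProduct.one_def]
        rfl
      simp only [h1, h2]
      exact key_swap (Bmap T₁ x (y * a₂)) T₂ i j
  | add u v hu hv =>
      simp only [add_mul, tmul_add, map_add]
      rw [Finset.sum_add_distrib, hu, hv, ← Finset.sum_add_distrib]

/-- The comultiplication `∂` on `Ã = M_p ⊗ A`: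
`∂(T ⊗ a) = Σ_{i,j,k} (T e_{ki} ⊗ ·) ⊗ (e_{jk} ⊗ ·)` applied to `∂_{ij} a`. -/
def Dbig (D : Fin p → Fin p → (A →ₗ[ℂ] A ⊗[ℂ] A)) :
    (Matrix (Fin p) (Fin p) ℂ ⊗[ℂ] A) →ₗ[ℂ]
      (Matrix (Fin p) (Fin p) ℂ ⊗[ℂ] A) ⊗[ℂ] (Matrix (Fin p) (Fin p) ℂ ⊗[ℂ] A) :=
  ∑ i : Fin p, ∑ j : Fin p, ∑ k : Fin p,
    (Lmap i j k).comp (LinearMap.lTensor (Matrix (Fin p) (Fin p) ℂ) (D i j))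

theorem stmt6 (D : Fin p → Fin p → (A →ₗ[ℂ] A ⊗[ℂ] A))
    -- each ∂_{ij} is a derivation
    (hder : ∀ (i j : Fin p) (a b : A), D i j (a * b) =
      (a ⊗ₜ[ℂ] (1 : A)) * D i j b + D i j a * ((1 : A) ⊗ₜ[ℂ] b))
    -- each ∂_{ij} is coassociative and they are compatible
    (hcompat : ∀ (i j k l : Fin p) (a : A),
      TensorProduct.assoc ℂ A A A (LinearMap.rTensor A (D i j) (D k l a)) =
        LinearMap.lTensor A (D k l) (D i j a)) :
    ∀ (T₁ T₂ : Matrix (Fin p) (Fin p) ℂ) (a₁ a₂ : A),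
      Dbig D ((T₁ ⊗ₜ[ℂ] a₁) * (T₂ ⊗ₜ[ℂ] a₂)) =
        ((T₁ ⊗ₜ[ℂ] a₁) ⊗ₜ[ℂ] (1 : Matrix (Fin p) (Fin p) ℂ ⊗[ℂ] A)) * Dbig D (T₂ ⊗ₜ[ℂ] a₂) +
        Dbig D (T₁ ⊗ₜ[ℂ] a₁) * ((1 : Matrix (Fin p) (Fin p) ℂ ⊗[ℂ] A) ⊗ₜ[ℂ] (T₂ ⊗ₜ[ℂ] a₂)) := by
  intro T₁ T₂ a₁ a₂
  rw [Algebra.TensorProduct.tmul_mul_tmul]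
  simp only [Dbig, LinearMap.sum_apply, LinearMap.coe_comp, Function.comp_apply,
    LinearMap.lTensor_tmul]
  simp only [hder, tmul_add, map_add, Finset.sum_add_distrib]
  refine congrArg₂ (· + ·) ?_ ?_
  · simp only [Finset.mul_sum]
    exact Finset.sum_congr rfl fun i _ => Finset.sum_congr rfl fun j _ =>
      Finset.sum_congr rfl fun k _ => part1 i j k T₁ T₂ a₁ (D i j a₂)
  · simp only [Finset.sum_mul]
    exact Finset.sum_congr rfl fun i _ => Finset.sum_congr rfl fun j _ =>
      part2 i j T₁ T₂ a₂ (D i j a₁)
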